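/- Let H be a digraph with no circular N and let Tr(G,L) be the triple digraph of an instance (G,L) of LHOM(H). If (x',a',b') is reachable from (x,a,b) in Tr(G,L), then any L-homomorphism f of G to H with f(x) = a satisfies f(x') ≠ b'. -/
import Mathlib


namespace DigraphListHom

variable {V W : Type*}

/-- One step of a walk: forward if `dir = true`, backward otherwise. -/
def Step (H : V → V → Prop) (u v : V) (dir : Bool) : Prop :=
  if dir then H u v else H v u

/-- `x` is a walk in `H` with direction pattern `d`. -/
def IsWalk (H : V → V → Prop) {n : ℕ} (d : Fin n → Bool) (x : Fin (n + 1) → V) : Prop :=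
  ∀ i : Fin n, Step H (x i.castSucc) (x i.succ) (d i)

/-- `x_i y_{i+1}` is a faithful edge from `X` to `Y` at position `i`. -/
def FaithfulAt (H : V → V → Prop) {n : ℕ} (d : Fin n → Bool) (x y : Fin (n + 1) → V)
    (i : Fin n) : Prop :=
  Step H (x i.castSucc) (y i.succ) (d i)

/-- `X` avoids `Y`: there is no faithful edge from `X` to `Y`. -/
def Avoids (H : V → V → Prop) {n : ℕ} (d : Fin n → Bool) (x y : Fin (n + 1) → V) : Prop :=
  ∀ i, ¬ FaithfulAt H d x y i

/-- `Z` protects `Y` from `X`: faithful edges `x_i z_{i+1}` and `z_j y_{j+1}` imply `j ≤ i`. -/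
def Protects (H : V → V → Prop) {n : ℕ} (d : Fin n → Bool) (x y z : Fin (n + 1) → V) : Prop :=
  ∀ i j : Fin n, FaithfulAt H d x z i → FaithfulAt H d z y j → (j : ℕ) ≤ (i : ℕ)

/-- `H` contains a circular `N`: congruent walks `X` from `x` to `x`, `Y` from `y` to `y`,
`Z` from `y` to `x`, with `X` avoiding `Y` and `Z` protecting `Y` from `X`. -/
def CircularN (H : V → V → Prop) : Prop :=
  ∃ n : ℕ, 0 < n ∧ ∃ (d : Fin n → Bool) (x y z : Fin (n + 1) → V),
    IsWalk H d x ∧ IsWalk H d y ∧ IsWalk H d z ∧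
    x (Fin.last n) = x 0 ∧ y (Fin.last n) = y 0 ∧
    z 0 = y 0 ∧ z (Fin.last n) = x 0 ∧
    Avoids H d x y ∧ Protects H d x y z

/-- Arc relation of the pair digraph `H⁺` (on ambient pairs). -/
def PairArc (H : V → V → Prop) (p q : V × V) : Prop :=
  (H p.1 q.1 ∧ H p.2 q.2 ∧ ¬ H p.1 q.2) ∨ (H q.1 p.1 ∧ H q.2 p.2 ∧ ¬ H q.2 p.1)

/-- Arc relation of `H⁺` restricted to genuine vertices (pairs of distinct vertices). -/
def PairArcD (H : V → V → Prop) (p q : V × V) : Prop :=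
  p.1 ≠ p.2 ∧ q.1 ≠ q.2 ∧ PairArc H p q

/-- Reachability in `H⁺`. -/
def PairReach (H : V → V → Prop) : V × V → V × V → Prop :=
  Relation.ReflTransGen (PairArcD H)

/-- Mutual reachability in `H⁺` (same strong component). -/
def SameSCC (H : V → V → Prop) (p q : V × V) : Prop :=
  PairReach H p q ∧ PairReach H q p

/-- `C` is a strong component of the digraph with arc relation `R`. -/
def IsStrongComponent {α : Type*} (R : α → α → Prop) (C : Set α) : Prop :=
  ∃ a, C = {b | Relation.ReflTransGen R a b ∧ Relation.ReflTransGen R b a}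

/-- There is a directed path with `m` vertices in the condensation of `H⁺`
ending at the strong component of `p`. -/
def CondChain (H : V → V → Prop) (p : V × V) (m : ℕ) : Prop :=
  ∃ r : Fin m → V × V,
    (∀ i, (r i).1 ≠ (r i).2) ∧
    (∀ i j : Fin m, i < j → PairReach H (r i) (r j) ∧ ¬ PairReach H (r j) (r i)) ∧
    (∀ i, PairReach H (r i) p) ∧
    (∀ h : 0 < m, PairReach H p (r ⟨m - 1, Nat.sub_lt h Nat.one_pos⟩))

/-- `μ(p)`: the maximum number of vertices of a directed path in the condensation of `H⁺`
ending at the strong component of `p` (with `μ(x,x) = 0`). -/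
noncomputable def mu (H : V → V → Prop) (p : V × V) : ℕ :=
  sSup {m | CondChain H p m}

/-- The unordered pair `{u, v}` is `k`-allowed with respect to the ordering `ord` of `V(H⁺)`:
neither `(u,v)` nor `(v,u)` is `k`-processed (i.e. has position `> k`). -/
def KAllowed (ord : V × V → ℕ) (k : ℕ) (u v : V) : Prop :=
  u = v ∨ (ord (u, v) ≤ k ∧ ord (v, u) ≤ k)

/-- `ord` is an ordering of the vertices of `H⁺` listing the strong components
consecutively, in an order in which each component is a sink among the later ones. -/
def GoodOrd (H : V → V → Prop) (ord : V × V → ℕ) : Prop :=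
  (∀ p q : V × V, p.1 ≠ p.2 → q.1 ≠ q.2 → ord p = ord q → p = q) ∧
  (∀ p q : V × V, p.1 ≠ p.2 → q.1 ≠ q.2 → PairReach H p q → ¬ PairReach H q p →
    ord p < ord q) ∧
  (∀ p q r : V × V, p.1 ≠ p.2 → q.1 ≠ q.2 → r.1 ≠ r.2 →
    SameSCC H p q → ord p ≤ ord r → ord r ≤ ord q → SameSCC H p r)

/-- `f` is an `L`-homomorphism of `G` to `H`. -/
def IsLHom (H : V → V → Prop) (G : W → W → Prop) (L : W → Set V) (f : W → V) : Prop :=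
  (∀ u v, G u v → H (f u) (f v)) ∧ ∀ w, f w ∈ L w

/-- Arc relation of the triple digraph `Tr(G,L)`. -/
def TrArc (H : V → V → Prop) (G : W → W → Prop) (L : W → Set V)
    (p q : W × V × V) : Prop :=
  p.2.1 ∈ L p.1 ∧ p.2.2 ∈ L p.1 ∧ q.2.1 ∈ L q.1 ∧ q.2.2 ∈ L q.1 ∧
  G p.1 q.1 ∧ H p.2.1 q.2.1 ∧ H p.2.2 q.2.2 ∧ ¬ H p.2.1 q.2.2 ∧ ¬ H p.2.2 q.2.1

/-- Symmetrization of the triple-digraph arc relation (for weak connectivity). -/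
def TrSym (H : V → V → Prop) (G : W → W → Prop) (L : W → Set V)
    (p q : W × V × V) : Prop :=
  TrArc H G L p q ∨ TrArc H G L q p

/-- Weak connectivity in the triple digraph `Tr(G,L)`. -/
def WConn (H : V → V → Prop) (G : W → W → Prop) (L : W → Set V) :
    W × V × V → W × V × V → Prop :=
  Relation.ReflTransGen (TrSym H G L)

/-- `f` is a ternary polymorphism of `H`. -/
def Polymorphism3 (H : V → V → Prop) (f : V → V → V → V) : Prop :=
  ∀ a a' b b' c c', H a a' → H b b' → H c c' → H (f a b c) (f a' b' c')

/-- `f` is conservative. -/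
def Conservative3 (f : V → V → V → V) : Prop :=
  ∀ a b c, f a b c = a ∨ f a b c = b ∨ f a b c = c

/-- `f 1, …, f k` satisfy the Hagemann–Mitschke identities. -/
def HMChain (f : ℕ → V → V → V → V) (k : ℕ) : Prop :=
  (∀ x y, f 1 x y y = x) ∧
  (∀ i, 1 ≤ i → i < k → ∀ x y, f i x x y = f (i + 1) x y y) ∧
  (∀ x y, f k x x y = y)

/-- `H` contains a pair of independent edges. -/
def IndependentEdges (H : V → V → Prop) : Prop :=
  ∃ a b c d, H a b ∧ H c d ∧ ¬ H a d ∧ ¬ H c b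

/-- `H` contains a bicycle. -/
def Bicycle (H : V → V → Prop) : Prop :=
  ∃ n : ℕ, 0 < n ∧ ∃ x y : Fin (n + 1) → V,
    x (Fin.last n) = x 0 ∧ y (Fin.last n) = y 0 ∧
    ∀ i : Fin n, H (x i.castSucc) (x i.succ) ∧ H (y i.castSucc) (y i.succ) ∧
      ¬ H (x i.castSucc) (y i.succ) ∧ H (y i.castSucc) (x i.succ)

/-- `a` is an `i`-distinguisher of `a, b, c`. -/
def IDist (H : V → V → Prop) (i : ℕ) (a b c : V) : Prop :=
  ∃ (n : ℕ) (d : Fin n → Bool) (X Y Z : Fin (n + 1) → V),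
    IsWalk H d X ∧ IsWalk H d Y ∧ IsWalk H d Z ∧
    X 0 = a ∧ Y 0 = b ∧ Z 0 = c ∧
    Y (Fin.last n) = Z (Fin.last n) ∧
    i ≤ mu H (X (Fin.last n), Y (Fin.last n)) ∧
    Avoids H d Y X ∧ Avoids H d Z X

section Statement7Aux

lemma aux_step_true_iff {H : V → V → Prop} {u v : V} : Step H u v true ↔ H u v := by
  simp [Step]

lemma aux_reflTransGen_chain {α : Type*} {R : α → α → Prop} {p q : α}
    (h : Relation.ReflTransGen R p q) :
    ∃ (n : ℕ) (F : ℕ → α), F 0 = p ∧ F n = q ∧ ∀ t, t < n → R (F t) (F (t + 1)) := by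
  induction h with
  | refl => exact ⟨0, fun _ => p, rfl, rfl, fun t ht => absurd ht (Nat.not_lt_zero t)⟩
  | @tail q r hpq hqr ih =>
    obtain ⟨n, F, hF0, hFn, hstep⟩ := ih
    refine ⟨n + 1, fun t => if t ≤ n then F t else r, ?_, ?_, ?_⟩
    · show (if 0 ≤ n then F 0 else r) = p
      rw [if_pos (Nat.zero_le n)]; exact hF0
    · show (if n + 1 ≤ n then F (n + 1) else r) = r
      rw [if_neg (by omega)]
    · intro t ht
      rcases Nat.lt_or_ge t n with h1 | h1
      · show R (if t ≤ n then F t else r) (if t + 1 ≤ n then F (t + 1) else r)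
        rw [if_pos (by omega : t ≤ n), if_pos (by omega : t + 1 ≤ n)]
        exact hstep t h1
      · have ht' : t = n := by omega
        subst ht'
        show R (if t ≤ t then F t else r) (if t + 1 ≤ t then F (t + 1) else r)
        rw [if_pos le_rfl, if_neg (by omega), hFn]
        exact hqr

lemma aux_pairReach_walks {H : V → V → Prop} {p q : V × V} (h : PairReach H p q) :
    ∃ (m : ℕ) (e : ℕ → Bool) (U T : ℕ → V),
      U 0 = p.1 ∧ T 0 = p.2 ∧ U m = q.1 ∧ T m = q.2 ∧
      (∀ t, t < m → Step H (U t) (U (t + 1)) (e t)) ∧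
      (∀ t, t < m → Step H (T t) (T (t + 1)) (e t)) ∧
      (∀ t, t < m → ¬ Step H (U t) (T (t + 1)) (e t)) := by
  induction h with
  | refl =>
    exact ⟨0, fun _ => true, fun _ => p.1, fun _ => p.2, rfl, rfl, rfl, rfl,
      fun t ht => absurd ht (Nat.not_lt_zero t), fun t ht => absurd ht (Nat.not_lt_zero t),
      fun t ht => absurd ht (Nat.not_lt_zero t)⟩
  | @tail r s hpr hrs ih =>
    obtain ⟨m, e, U, T, hU0, hT0, hUm, hTm, hU, hT, hav⟩ := ih
    obtain ⟨hne1, hne2, harc⟩ := hrs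
    have build : ∀ bNew : Bool, Step H r.1 s.1 bNew → Step H r.2 s.2 bNew →
        ¬ Step H r.1 s.2 bNew →
        ∃ (m' : ℕ) (e' : ℕ → Bool) (U' T' : ℕ → V),
          U' 0 = p.1 ∧ T' 0 = p.2 ∧ U' m' = s.1 ∧ T' m' = s.2 ∧
          (∀ t, t < m' → Step H (U' t) (U' (t + 1)) (e' t)) ∧
          (∀ t, t < m' → Step H (T' t) (T' (t + 1)) (e' t)) ∧
          (∀ t, t < m' → ¬ Step H (U' t) (T' (t + 1)) (e' t)) := by
      intro bNew s1 s2 s3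
      refine ⟨m + 1, fun t => if t < m then e t else bNew,
        fun t => if t ≤ m then U t else s.1, fun t => if t ≤ m then T t else s.2,
        ?_, ?_, ?_, ?_, ?_, ?_, ?_⟩
      · show (if 0 ≤ m then U 0 else s.1) = p.1
        rw [if_pos (Nat.zero_le m)]; exact hU0
      · show (if 0 ≤ m then T 0 else s.2) = p.2
        rw [if_pos (Nat.zero_le m)]; exact hT0
      · show (if m + 1 ≤ m then U (m + 1) else s.1) = s.1
        rw [if_neg (by omega)]
      · show (if m + 1 ≤ m then T (m + 1) else s.2) = s.2
        rw [if_neg (by omega)]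
      · intro t ht
        rcases Nat.lt_or_ge t m with h4 | h4
        · show Step H (if t ≤ m then U t else s.1) (if t + 1 ≤ m then U (t + 1) else s.1)
            (if t < m then e t else bNew)
          rw [if_pos (by omega : t ≤ m), if_pos (by omega : t + 1 ≤ m), if_pos h4]
          exact hU t h4
        · have ht' : t = m := by omega
          subst ht'
          show Step H (if t ≤ t then U t else s.1) (if t + 1 ≤ t then U (t + 1) else s.1)
            (if t < t then e t else bNew)
          rw [if_pos le_rfl, if_neg (by omega), if_neg (by omega), hUm]
          exact s1
      · intro t ht
        rcases Nat.lt_or_ge t m with h4 | h4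
        · show Step H (if t ≤ m then T t else s.2) (if t + 1 ≤ m then T (t + 1) else s.2)
            (if t < m then e t else bNew)
          rw [if_pos (by omega : t ≤ m), if_pos (by omega : t + 1 ≤ m), if_pos h4]
          exact hT t h4
        · have ht' : t = m := by omega
          subst ht'
          show Step H (if t ≤ t then T t else s.2) (if t + 1 ≤ t then T (t + 1) else s.2)
            (if t < t then e t else bNew)
          rw [if_pos le_rfl, if_neg (by omega), if_neg (by omega), hTm]
          exact s2
      · intro t ht hfe
        have hfe' : Step H (if t ≤ m then U t else s.1) (if t + 1 ≤ m then T (t + 1) else s.2)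
            (if t < m then e t else bNew) := hfe
        rcases Nat.lt_or_ge t m with h4 | h4
        · apply hav t h4
          have e1 : (if t ≤ m then U t else s.1) = U t := if_pos (by omega)
          have e2 : (if t + 1 ≤ m then T (t + 1) else s.2) = T (t + 1) := if_pos (by omega)
          have e3 : (if t < m then e t else bNew) = e t := if_pos h4
          rwa [e1, e2, e3] at hfe'
        · have ht' : t = m := by omega
          subst ht'
          apply s3
          have e1 : (if t ≤ t then U t else s.1) = U t := if_pos le_rfl
          have e2 : (if t + 1 ≤ t then T (t + 1) else s.2) = s.2 := if_neg (by omega)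
          have e3 : (if t < t then e t else bNew) = bNew := if_neg (by omega)
          rw [e1, e2, e3, hUm] at hfe'
          exact hfe'
    rcases harc with ⟨h1, h2, h3⟩ | ⟨h1, h2, h3⟩
    · exact build true (by rw [aux_step_true_iff]; exact h1)
        (by rw [aux_step_true_iff]; exact h2)
        (by rw [aux_step_true_iff]; exact h3)
    · refine build false ?_ ?_ ?_
      · show Step H r.1 s.1 false
        simp only [Step, Bool.false_eq_true, if_false]
        exact h1
      · show Step H r.2 s.2 false
        simp only [Step, Bool.false_eq_true, if_false]
        exact h2
      · show ¬ Step H r.1 s.2 false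
        simp only [Step, Bool.false_eq_true, if_false]
        exact h3

lemma aux_circularN_of_nat (H : V → V → Prop) (N : ℕ) (hN : 0 < N) (D : ℕ → Bool)
    (X Y Z : ℕ → V)
    (hXw : ∀ t, t < N → Step H (X t) (X (t + 1)) (D t))
    (hYw : ∀ t, t < N → Step H (Y t) (Y (t + 1)) (D t))
    (hZw : ∀ t, t < N → Step H (Z t) (Z (t + 1)) (D t))
    (hXc : X N = X 0) (hYc : Y N = Y 0) (hZ0 : Z 0 = Y 0) (hZN : Z N = X 0)
    (hav : ∀ t, t < N → ¬ Step H (X t) (Y (t + 1)) (D t))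
    (hprot : ∀ i j, i < N → j < N → Step H (X i) (Z (i + 1)) (D i) →
      Step H (Z j) (Y (j + 1)) (D j) → j ≤ i) :
    CircularN H := by
  refine ⟨N, hN, fun i => D i.val, fun i => X i.val, fun i => Y i.val, fun i => Z i.val,
    ?_, ?_, ?_, ?_, ?_, ?_, ?_, ?_, ?_⟩
  · intro i
    simpa [Fin.coe_castSucc, Fin.val_succ] using hXw i.val i.isLt
  · intro i
    simpa [Fin.coe_castSucc, Fin.val_succ] using hYw i.val i.isLt
  · intro i
    simpa [Fin.coe_castSucc, Fin.val_succ] using hZw i.val i.isLt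
  · simpa [Fin.val_last, Fin.val_zero] using hXc
  · simpa [Fin.val_last, Fin.val_zero] using hYc
  · simpa [Fin.val_zero] using hZ0
  · simpa [Fin.val_last, Fin.val_zero] using hZN
  · intro i hfe
    exact hav i.val i.isLt
      (by simpa [FaithfulAt, Fin.coe_castSucc, Fin.val_succ] using hfe)
  · intro i j h1 h2
    exact hprot i.val j.val i.isLt j.isLt
      (by simpa [FaithfulAt, Fin.coe_castSucc, Fin.val_succ] using h1)
      (by simpa [FaithfulAt, Fin.coe_castSucc, Fin.val_succ] using h2)

lemma aux_assemble {H : V → V → Prop} (n1 : ℕ) (hn1 : 0 < n1) (X1 Y1 Z1 : ℕ → V)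
    (hX : ∀ t, t < n1 → H (X1 t) (X1 (t + 1)))
    (hY : ∀ t, t < n1 → H (Y1 t) (Y1 (t + 1)))
    (hZ : ∀ t, t < n1 → H (Z1 t) (Z1 (t + 1)))
    (hZ0 : Z1 0 = Y1 0) (hZn : Z1 n1 = X1 n1)
    (havoid : ∀ t, t < n1 → ¬ H (X1 t) (Y1 (t + 1)))
    (hnc : ∀ s s', s < s' → s' < n1 → ¬ (H (X1 s) (Z1 (s + 1)) ∧ H (Z1 s') (Y1 (s' + 1))))
    (hret : PairReach H (X1 n1, Y1 n1) (X1 0, Y1 0)) :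
    CircularN H := by
  obtain ⟨m, e, U, T, hU0, hT0, hUm, hTm, hUw, hTw, hUT⟩ := aux_pairReach_walks hret
  have hU0' : U 0 = X1 n1 := hU0
  have hT0' : T 0 = Y1 n1 := hT0
  have hUm' : U m = X1 0 := hUm
  have hTm' : T m = Y1 0 := hTm
  set D : ℕ → Bool := fun t => if t < n1 then true else e (t - n1) with hD
  set X : ℕ → V := fun t => if t ≤ n1 then X1 t else U (t - n1) with hXd
  set Y : ℕ → V := fun t => if t ≤ n1 then Y1 t else T (t - n1) with hYd
  set Z : ℕ → V := fun t => if t ≤ n1 then Z1 t else U (t - n1) with hZd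
  have hXle : ∀ t, t ≤ n1 → X t = X1 t := by intro t ht; simp [hXd, ht]
  have hYle : ∀ t, t ≤ n1 → Y t = Y1 t := by intro t ht; simp [hYd, ht]
  have hZle : ∀ t, t ≤ n1 → Z t = Z1 t := by intro t ht; simp [hZd, ht]
  have hXge : ∀ t, n1 ≤ t → X t = U (t - n1) := by
    intro t ht
    rcases Nat.eq_or_lt_of_le ht with rfl | h
    · simp [hXd, hU0']
    · simp [hXd, show ¬ t ≤ n1 by omega]
  have hYge : ∀ t, n1 ≤ t → Y t = T (t - n1) := by
    intro t ht
    rcases Nat.eq_or_lt_of_le ht with rfl | h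
    · simp [hYd, hT0']
    · simp [hYd, show ¬ t ≤ n1 by omega]
  have hZge : ∀ t, n1 ≤ t → Z t = U (t - n1) := by
    intro t ht
    rcases Nat.eq_or_lt_of_le ht with rfl | h
    · simp [hZd, hZn, hU0']
    · simp [hZd, show ¬ t ≤ n1 by omega]
  have hDlt : ∀ t, t < n1 → D t = true := by intro t ht; simp [hD, ht]
  have hDge : ∀ t, n1 ≤ t → D t = e (t - n1) := by
    intro t ht; simp [hD, show ¬ t < n1 by omega]
  have hXw : ∀ t, t < n1 + m → Step H (X t) (X (t + 1)) (D t) := by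
    intro t ht
    rcases Nat.lt_or_ge t n1 with h | h
    · rw [hXle t (by omega), hXle (t + 1) (by omega), hDlt t h, aux_step_true_iff]
      exact hX t h
    · rw [hXge t h, hXge (t + 1) (by omega), hDge t h,
        show t + 1 - n1 = (t - n1) + 1 by omega]
      exact hUw (t - n1) (by omega)
  have hYw' : ∀ t, t < n1 + m → Step H (Y t) (Y (t + 1)) (D t) := by
    intro t ht
    rcases Nat.lt_or_ge t n1 with h | h
    · rw [hYle t (by omega), hYle (t + 1) (by omega), hDlt t h, aux_step_true_iff]
      exact hY t h
    · rw [hYge t h, hYge (t + 1) (by omega), hDge t h,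
        show t + 1 - n1 = (t - n1) + 1 by omega]
      exact hTw (t - n1) (by omega)
  have hZw' : ∀ t, t < n1 + m → Step H (Z t) (Z (t + 1)) (D t) := by
    intro t ht
    rcases Nat.lt_or_ge t n1 with h | h
    · rw [hZle t (by omega), hZle (t + 1) (by omega), hDlt t h, aux_step_true_iff]
      exact hZ t h
    · rw [hZge t h, hZge (t + 1) (by omega), hDge t h,
        show t + 1 - n1 = (t - n1) + 1 by omega]
      exact hUw (t - n1) (by omega)
  have hXc : X (n1 + m) = X 0 := by
    rw [hXge (n1 + m) (by omega), show n1 + m - n1 = m by omega, hUm', hXle 0 (by omega)]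
  have hYc : Y (n1 + m) = Y 0 := by
    rw [hYge (n1 + m) (by omega), show n1 + m - n1 = m by omega, hTm', hYle 0 (by omega)]
  have hZ0' : Z 0 = Y 0 := by
    rw [hZle 0 (by omega), hYle 0 (by omega)]; exact hZ0
  have hZc : Z (n1 + m) = X 0 := by
    rw [hZge (n1 + m) (by omega), show n1 + m - n1 = m by omega, hUm', hXle 0 (by omega)]
  have hav : ∀ t, t < n1 + m → ¬ Step H (X t) (Y (t + 1)) (D t) := by
    intro t ht
    rcases Nat.lt_or_ge t n1 with h | h
    · rw [hXle t (by omega), hYle (t + 1) (by omega), hDlt t h, aux_step_true_iff]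
      exact havoid t h
    · rw [hXge t h, hYge (t + 1) (by omega), hDge t h,
        show t + 1 - n1 = (t - n1) + 1 by omega]
      exact hUT (t - n1) (by omega)
  have hprot : ∀ i j, i < n1 + m → j < n1 + m → Step H (X i) (Z (i + 1)) (D i) →
      Step H (Z j) (Y (j + 1)) (D j) → j ≤ i := by
    intro i j hi hj f1 f2
    rcases Nat.lt_or_ge j n1 with h | h
    · rcases Nat.lt_or_ge i n1 with h' | h'
      · rw [hZle j (by omega), hYle (j + 1) (by omega), hDlt j h, aux_step_true_iff] at f2
        rw [hXle i (by omega), hZle (i + 1) (by omega), hDlt i h', aux_step_true_iff] at f1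
        by_contra hcon
        exact hnc i j (by omega) h ⟨f1, f2⟩
      · omega
    · exfalso
      rw [hZge j h, hYge (j + 1) (by omega), hDge j h,
        show j + 1 - n1 = (j - n1) + 1 by omega] at f2
      exact hUT (j - n1) (by omega) f2
  exact aux_circularN_of_nat H (n1 + m) (by omega) D X Y Z hXw hYw' hZw' hXc hYc hZ0' hZc hav hprot

end Statement7Aux

section Statement7Main

lemma aux_no_trap {H : V → V → Prop} (hH : ¬ CircularN H)
    {ord : V × V → ℕ} (hord : GoodOrd H ord) {k : ℕ}
    {n : ℕ} (hn : 0 < n) (As Bs Ws : ℕ → V)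
    (hAA : ∀ t, t < n → H (As t) (As (t + 1)))
    (hBB : ∀ t, t < n → H (Bs t) (Bs (t + 1)))
    (hWW : ∀ t, t < n → H (Ws t) (Ws (t + 1)))
    (hAB : ∀ t, t < n → ¬ H (As t) (Bs (t + 1)))
    (hBA : ∀ t, t < n → ¬ H (Bs t) (As (t + 1)))
    (hal : ∀ t, t < n → KAllowed ord k (Ws t) (Bs t))
    (hk : ord (As 0, Bs 0) = k)
    (hW0 : Ws 0 = As 0) (hWn : Ws n = Bs n) : False := by
  -- distinctness along the pair walk
  have dAB : ∀ t, t ≤ n → As t ≠ Bs t := by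
    intro t ht he
    rcases Nat.lt_or_ge t n with h | h
    · exact hBA t h (by rw [← he]; exact hAA t h)
    · have htn : t = n := by omega
      subst htn
      refine hAB (t - 1) (by omega) ?_
      have h1 := hAA (t - 1) (by omega)
      rw [show t - 1 + 1 = t by omega] at h1 ⊢
      rw [← he]; exact h1
  have arcF : ∀ t, t < n → PairArcD H (As t, Bs t) (As (t + 1), Bs (t + 1)) :=
    fun t ht => ⟨dAB t (by omega), dAB (t + 1) (by omega),
      Or.inl ⟨hAA t ht, hBB t ht, hAB t ht⟩⟩
  have arcR : ∀ t, t < n → PairArcD H (As (t + 1), Bs (t + 1)) (As t, Bs t) :=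
    fun t ht => ⟨dAB (t + 1) (by omega), dAB t (by omega),
      Or.inr ⟨hAA t ht, hBB t ht, hBA t ht⟩⟩
  have arcRba : ∀ t, t < n → PairArcD H (Bs (t + 1), As (t + 1)) (Bs t, As t) :=
    fun t ht => ⟨Ne.symm (dAB (t + 1) (by omega)), Ne.symm (dAB t (by omega)),
      Or.inr ⟨hBB t ht, hAA t ht, hAB t ht⟩⟩
  have reachF0 : ∀ t, t ≤ n → PairReach H (As 0, Bs 0) (As t, Bs t) := by
    intro t
    induction t with
    | zero => intro _; exact Relation.ReflTransGen.refl
    | succ t iht => intro ht; exact (iht (by omega)).tail (arcF t (by omega))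
  have reachR : ∀ t, t ≤ n → PairReach H (As t, Bs t) (As 0, Bs 0) := by
    intro t
    induction t with
    | zero => intro _; exact Relation.ReflTransGen.refl
    | succ t iht =>
      intro ht
      exact Relation.ReflTransGen.head (arcR t (by omega)) (iht (by omega))
  have reachRba : ∀ t, t ≤ n → PairReach H (Bs t, As t) (Bs 0, As 0) := by
    intro t
    induction t with
    | zero => intro _; exact Relation.ReflTransGen.refl
    | succ t iht =>
      intro ht
      exact Relation.ReflTransGen.head (arcRba t (by omega)) (iht (by omega))
  have absorb : ∀ p : V × V, p.1 ≠ p.2 → KAllowed ord k p.1 p.2 →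
      PairReach H (As 0, Bs 0) p → PairReach H p (As 0, Bs 0) := by
    intro p hne hall hr
    by_contra hnr
    have hlt := hord.2.1 (As 0, Bs 0) p (dAB 0 (by omega)) hne hr hnr
    rcases hall with he | ⟨h1, h2⟩
    · exact hne he
    · rw [Prod.mk.eta] at h1
      omega
  -- the corridor construction
  have endgame : ∀ i j, i < j → j < n → H (As i) (Ws (i + 1)) → H (Bs i) (Ws (i + 1)) →
      H (Ws j) (As (j + 1)) → (∀ t, i < t → t < j → ¬ H (Ws t) (Bs (t + 1))) → False := by
    intro i j hij hjn hAent hBent hAex hcor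
    set X1 : ℕ → V := fun t => if t ≤ i then As t else Ws t with hX1d
    set Z1 : ℕ → V := fun t => if t ≤ i then Bs t else Ws t with hZ1d
    have hX1le : ∀ t, t ≤ i → X1 t = As t := by intro t ht; simp [hX1d, ht]
    have hX1gt : ∀ t, i < t → X1 t = Ws t := by
      intro t ht; simp [hX1d, show ¬ t ≤ i by omega]
    have hZ1le : ∀ t, t ≤ i → Z1 t = Bs t := by intro t ht; simp [hZ1d, ht]
    have hZ1gt : ∀ t, i < t → Z1 t = Ws t := by
      intro t ht; simp [hZ1d, show ¬ t ≤ i by omega]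
    have hX1w : ∀ t, t < j → H (X1 t) (X1 (t + 1)) := by
      intro t ht
      rcases Nat.lt_trichotomy t i with h | h | h
      · rw [hX1le t (by omega), hX1le (t + 1) (by omega)]; exact hAA t (by omega)
      · rw [h, hX1le i le_rfl, hX1gt (i + 1) (by omega)]; exact hAent
      · rw [hX1gt t h, hX1gt (t + 1) (by omega)]; exact hWW t (by omega)
    have hZ1w : ∀ t, t < j → H (Z1 t) (Z1 (t + 1)) := by
      intro t ht
      rcases Nat.lt_trichotomy t i with h | h | h
      · rw [hZ1le t (by omega), hZ1le (t + 1) (by omega)]; exact hBB t (by omega)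
      · rw [h, hZ1le i le_rfl, hZ1gt (i + 1) (by omega)]; exact hBent
      · rw [hZ1gt t h, hZ1gt (t + 1) (by omega)]; exact hWW t (by omega)
    have hY1w : ∀ t, t < j → H (Bs t) (Bs (t + 1)) := fun t ht => hBB t (by omega)
    have hav1 : ∀ t, t < j → ¬ H (X1 t) (Bs (t + 1)) := by
      intro t ht
      rcases le_or_gt t i with h | h
      · rw [hX1le t h]; exact hAB t (by omega)
      · rw [hX1gt t h]; exact hcor t h ht
    have hnc1 : ∀ s s', s < s' → s' < j →
        ¬ (H (X1 s) (Z1 (s + 1)) ∧ H (Z1 s') (Bs (s' + 1))) := by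
      rintro s s' h1 h2 ⟨c1, c2⟩
      rcases Nat.lt_or_ge s i with h3 | h3
      · rw [hX1le s (by omega), hZ1le (s + 1) (by omega)] at c1
        exact hAB s (by omega) c1
      · rw [hZ1gt s' (by omega)] at c2
        exact hcor s' (by omega) h2 c2
    have hWjBj : Ws j ≠ Bs j := by
      intro he
      rw [he] at hAex
      exact hBA j hjn hAex
    have arcj : PairArcD H (As (j + 1), Bs (j + 1)) (Ws j, Bs j) :=
      ⟨dAB (j + 1) (by omega), hWjBj, Or.inr ⟨hAex, hBB j hjn, hBA j hjn⟩⟩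
    have hreach2 : PairReach H (Ws j, Bs j) (As 0, Bs 0) :=
      absorb (Ws j, Bs j) hWjBj (hal j hjn) ((reachF0 (j + 1) (by omega)).tail arcj)
    have hret1 : PairReach H (X1 j, Bs j) (X1 0, Bs 0) := by
      rw [hX1gt j (by omega), hX1le 0 (by omega)]
      exact hreach2
    exact hH (aux_assemble j (by omega) X1 Bs Z1 hX1w hY1w hZ1w (hZ1le 0 (by omega))
      (by rw [hZ1gt j (by omega), hX1gt j (by omega)]) hav1 hnc1 hret1)
  -- crossing elimination
  have key : ∀ w i j, i < j → j < n → j - i ≤ w →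
      ((H (Bs i) (Ws (i + 1)) ∧ H (Ws j) (As (j + 1))) ∨
       (H (As i) (Ws (i + 1)) ∧ H (Ws j) (Bs (j + 1)))) → False := by
    intro w
    induction w with
    | zero => intro i j hij hjn hle _; omega
    | succ w ih =>
      intro i j hij hjn hle hcase
      rcases hcase with ⟨hBent, hAex⟩ | ⟨hAent, hBex⟩
      · -- switch from B into W at i and out to A at j
        set S : ℕ → V := fun t => if t ≤ i then Bs t else if t ≤ j then Ws t else As t
          with hSd
        have Sv1 : ∀ t, t ≤ i → S t = Bs t := by intro t ht; simp [hSd, ht]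
        have Sv2 : ∀ t, i < t → t ≤ j → S t = Ws t := by
          intro t h1 h2; simp [hSd, show ¬ t ≤ i by omega, h2]
        have Sv3 : ∀ t, j < t → S t = As t := by
          intro t h1; simp [hSd, show ¬ t ≤ i by omega, show ¬ t ≤ j by omega]
        have Sw : ∀ t, t < n → H (S t) (S (t + 1)) := by
          intro t ht
          rcases Nat.lt_trichotomy t i with h | h | h
          · rw [Sv1 t (by omega), Sv1 (t + 1) (by omega)]; exact hBB t ht
          · rw [h, Sv1 i le_rfl, Sv2 (i + 1) (by omega) (by omega)]; exact hBent
          · rcases Nat.lt_trichotomy t j with h2 | h2 | h2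
            · rw [Sv2 t h (by omega), Sv2 (t + 1) (by omega) (by omega)]; exact hWW t ht
            · rw [h2, Sv2 j (by omega) le_rfl, Sv3 (j + 1) (by omega)]; exact hAex
            · rw [Sv3 t h2, Sv3 (t + 1) (by omega)]; exact hAA t ht
        by_cases hcross : ∃ s s', s < s' ∧ s' < n ∧ H (As s) (S (s + 1)) ∧
            H (S s') (Bs (s' + 1))
        · obtain ⟨s, s', hss, hs'n, hc1, hc2⟩ := hcross
          have hsi : i ≤ s := by
            by_contra hcon
            rw [Sv1 (s + 1) (by omega)] at hc1
            exact hAB s (by omega) hc1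
          have hs'j : s' ≤ j := by
            by_contra hcon
            rw [Sv3 s' (by omega)] at hc2
            exact hAB s' hs'n hc2
          rw [Sv2 (s + 1) (by omega) (by omega)] at hc1
          rw [Sv2 s' (by omega) (by omega)] at hc2
          by_cases heq : s = i ∧ s' = j
          · obtain ⟨h5, h6⟩ := heq
            rw [h5] at hc1
            rw [h6] at hc2
            by_cases hcor : ∃ t, i < t ∧ t < j ∧ H (Ws t) (Bs (t + 1))
            · obtain ⟨t, ht1, ht2, ht3⟩ := hcor
              exact ih i t ht1 (by omega) (by omega) (Or.inr ⟨hc1, ht3⟩)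
            · push_neg at hcor
              exact endgame i j hij hjn hc1 hBent hAex hcor
          · have hssw : s' - s ≤ w := by
              by_cases h7 : s = i
              · have h8 : s' ≠ j := fun h8 => heq ⟨h7, h8⟩
                omega
              · omega
            exact ih s s' hss hs'n hssw (Or.inr ⟨hc1, hc2⟩)
        · push_neg at hcross
          exact hH (aux_assemble n hn As Bs S hAA hBB Sw (Sv1 0 (by omega))
            (Sv3 n (by omega)) hAB (fun s s' h1 h2 hc => hcross s s' h1 h2 hc.1 hc.2)
            (reachR n le_rfl))
      · -- switch from A into W at i and out to B at j
        set T : ℕ → V := fun t => if t ≤ i then As t else if t ≤ j then Ws t else Bs t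
          with hTd
        have Tv1 : ∀ t, t ≤ i → T t = As t := by intro t ht; simp [hTd, ht]
        have Tv2 : ∀ t, i < t → t ≤ j → T t = Ws t := by
          intro t h1 h2; simp [hTd, show ¬ t ≤ i by omega, h2]
        have Tv3 : ∀ t, j < t → T t = Bs t := by
          intro t h1; simp [hTd, show ¬ t ≤ i by omega, show ¬ t ≤ j by omega]
        have Tw : ∀ t, t < n → H (T t) (T (t + 1)) := by
          intro t ht
          rcases Nat.lt_trichotomy t i with h | h | h
          · rw [Tv1 t (by omega), Tv1 (t + 1) (by omega)]; exact hAA t ht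
          · rw [h, Tv1 i le_rfl, Tv2 (i + 1) (by omega) (by omega)]; exact hAent
          · rcases Nat.lt_trichotomy t j with h2 | h2 | h2
            · rw [Tv2 t h (by omega), Tv2 (t + 1) (by omega) (by omega)]; exact hWW t ht
            · rw [h2, Tv2 j (by omega) le_rfl, Tv3 (j + 1) (by omega)]; exact hBex
            · rw [Tv3 t h2, Tv3 (t + 1) (by omega)]; exact hBB t ht
        by_cases hcross : ∃ s s', s < s' ∧ s' < n ∧ H (Bs s) (T (s + 1)) ∧
            H (T s') (As (s' + 1))
        · obtain ⟨s, s', hss, hs'n, hc1, hc2⟩ := hcross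
          have hsi : i ≤ s := by
            by_contra hcon
            rw [Tv1 (s + 1) (by omega)] at hc1
            exact hBA s (by omega) hc1
          have hs'j : s' ≤ j := by
            by_contra hcon
            rw [Tv3 s' (by omega)] at hc2
            exact hBA s' hs'n hc2
          rw [Tv2 (s + 1) (by omega) (by omega)] at hc1
          rw [Tv2 s' (by omega) (by omega)] at hc2
          by_cases heq : s = i ∧ s' = j
          · obtain ⟨h5, h6⟩ := heq
            rw [h5] at hc1
            rw [h6] at hc2
            by_cases hcor : ∃ t, i < t ∧ t < j ∧ H (Ws t) (Bs (t + 1))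
            · obtain ⟨t, ht1, ht2, ht3⟩ := hcor
              exact ih i t ht1 (by omega) (by omega) (Or.inr ⟨hAent, ht3⟩)
            · push_neg at hcor
              exact endgame i j hij hjn hAent hc1 hc2 hcor
          · have hssw : s' - s ≤ w := by
              by_cases h7 : s = i
              · have h8 : s' ≠ j := fun h8 => heq ⟨h7, h8⟩
                omega
              · omega
            exact ih s s' hss hs'n hssw (Or.inl ⟨hc1, hc2⟩)
        · push_neg at hcross
          exact hH (aux_assemble n hn Bs As T hBB hAA Tw (Tv1 0 (by omega))
            (Tv3 n (by omega)) hBA (fun s s' h1 h2 hc => hcross s s' h1 h2 hc.1 hc.2)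
            (reachRba n le_rfl))
  by_cases hcw : ∃ s s', s < s' ∧ s' < n ∧ H (Bs s) (Ws (s + 1)) ∧ H (Ws s') (As (s' + 1))
  · obtain ⟨s, s', h1, h2, h3, h4⟩ := hcw
    exact key (s' - s) s s' h1 h2 le_rfl (Or.inl ⟨h3, h4⟩)
  · push_neg at hcw
    exact hH (aux_assemble n hn Bs As Ws hBB hAA hWW hW0 hWn hBA
      (fun s s' h1 h2 hc => hcw s s' h1 h2 hc.1 hc.2) (reachRba n le_rfl))

end Statement7Main

/-- Corollary 4.4 ("spravne"): reachability in `Tr(G,L)` constrains homomorphisms. -/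
theorem statement7 (H : V → V → Prop) (hH : ¬ CircularN H)
    (G : W → W → Prop) (L : W → Set V)
    (ord : V × V → ℕ) (hord : GoodOrd H ord) (k : ℕ)
    (a b : V) (hab : a ≠ b) (hk : ord (a, b) = k)
    (hgood : ∀ w, ∀ u ∈ L w, ∀ v ∈ L w, KAllowed ord k u v)
    (x x' : W) (a' b' : V)
    (hreach : Relation.ReflTransGen (TrArc H G L) (x, a, b) (x', a', b'))
    (f : W → V) (hf : IsLHom H G L f) (hfx : f x = a) :
    f x' ≠ b' := by
  intro hfx'
  obtain ⟨n, F, hF0, hFn, hstep⟩ := aux_reflTransGen_chain hreach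
  rcases Nat.eq_zero_or_pos n with rfl | hn
  · rw [hF0] at hFn
    obtain ⟨h1, h2, h3⟩ : x = x' ∧ a = a' ∧ b = b' := by
      simpa [Prod.mk.injEq] using hFn
    exact hab (by rw [← hfx, h1, hfx', ← h3])
  · exact aux_no_trap hH hord hn (fun t => (F t).2.1) (fun t => (F t).2.2)
      (fun t => f ((F t).1))
      (fun t ht => (hstep t ht).2.2.2.2.2.1)
      (fun t ht => (hstep t ht).2.2.2.2.2.2.1)
      (fun t ht => hf.1 _ _ (hstep t ht).2.2.2.2.1)
      (fun t ht => (hstep t ht).2.2.2.2.2.2.2.1)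
      (fun t ht => (hstep t ht).2.2.2.2.2.2.2.2)
      (fun t ht => hgood ((F t).1) _ (hf.2 ((F t).1)) _ (hstep t ht).2.1)
      (by show ord ((F 0).2.1, (F 0).2.2) = k; rw [hF0]; exact hk)
      (by show f ((F 0).1) = (F 0).2.1; rw [hF0]; exact hfx)
      (by show f ((F n).1) = (F n).2.2; rw [hFn]; exact hfx')

end DigraphListHom
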